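/- For all odd integers t ≥ 1 and all integers n ≥ 0, the coefficient of q^{8n+2} in the formal power series ( φ(q)·φ(q²)²·φ(q⁴)⁴ )^t over ℤ is divisible by 4. -/

import Mathlib

open scoped Classical

/-- The infinite product `∏_{k ≥ 0} f k` of formal power series, in the situation where,
for each fixed power of `q`, only finitely many factors contribute: the coefficient of
`q^n` is read off from the product of the factors `f 0, …, f n` (all later factors are
assumed to be `1 + O(q^{n+1})`). -/
noncomputable def seriesProd (f : ℕ → PowerSeries ℤ) : PowerSeries ℤ :=
  PowerSeries.mk fun n => PowerSeries.coeff n (∏ k ∈ Finset.range (n + 1), f k)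

/-- The generating function `∏_{k ≥ 1} (1 - q^{2k})^t / (1 - q^k)^{2t}`
for `t`-colored overpartitions. -/
noncomputable def overGF (t : ℕ) : PowerSeries ℤ :=
  seriesProd fun k =>
    (1 - (PowerSeries.X : PowerSeries ℤ) ^ (2 * (k + 1))) ^ t *
      (PowerSeries.invOfUnit (1 - (PowerSeries.X : PowerSeries ℤ) ^ (k + 1)) 1) ^ (2 * t)

/-- `p̄_{-t}(n)`, the number of `t`-colored overpartitions of `n`: the coefficient of `q^n`
in `∏_{k ≥ 1} (1 - q^{2k})^t / (1 - q^k)^{2t}`. -/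
noncomputable def pbar (t n : ℕ) : ℤ :=
  PowerSeries.coeff n (overGF t)

/-- Ramanujan's theta function `φ(q^m) = 1 + 2 ∑_{k ≥ 1} q^{m k²}`. -/
noncomputable def phi (m : ℕ) : PowerSeries ℤ :=
  PowerSeries.mk fun n =>
    if n = 0 then 1 else if ∃ k : ℕ, 0 < k ∧ n = m * k ^ 2 then 2 else 0

/-- `φ(-q) = 1 + 2 ∑_{k ≥ 1} (-1)^{k²} q^{k²}` (note `(-1)^{k²} = (-1)^n` at `n = k²`). -/
noncomputable def phiNeg : PowerSeries ℤ :=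
  PowerSeries.mk fun n =>
    if n = 0 then 1 else if ∃ k : ℕ, 0 < k ∧ n = k ^ 2 then 2 * (-1) ^ n else 0

/-- Ramanujan's theta function `ψ(q^m) = ∑_{k ≥ 0} q^{m·k(k+1)/2}`. -/
noncomputable def psi (m : ℕ) : PowerSeries ℤ :=
  PowerSeries.mk fun n => if ∃ k : ℕ, 2 * n = m * (k * (k + 1)) then 1 else 0

/-- `f_r = ∏_{j ≥ 1} (1 - q^{r j})`. -/
noncomputable def fr (r : ℕ) : PowerSeries ℤ :=
  seriesProd fun j => 1 - (PowerSeries.X : PowerSeries ℤ) ^ (r * (j + 1))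


noncomputable def halfPhi (m : ℕ) : PowerSeries ℤ :=
  PowerSeries.mk fun n =>
    if n = 0 then 0 else if ∃ k : ℕ, 0 < k ∧ n = m * k ^ 2 then 1 else 0

lemma phi_eq_one_add_two_mul (m : ℕ) : phi m = 1 + 2 * halfPhi m := by
  ext n
  have h2 : (2 : PowerSeries ℤ) = PowerSeries.C 2 := by simp
  rw [map_add, h2, PowerSeries.coeff_C_mul]
  simp only [phi, halfPhi, PowerSeries.coeff_mk, PowerSeries.coeff_one]
  split_ifs <;> ring

lemma key_four_dvd (t : ℕ) (ht : Odd t) :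
    (4 : PowerSeries ℤ) ∣ (phi 1 * phi 2 ^ 2 * phi 4 ^ 4) ^ t - phi 1 := by
  obtain ⟨m, rfl⟩ := ht
  set a := halfPhi 1; set b := halfPhi 2; set c := halfPhi 4
  set P := phi 1 * phi 2 ^ 2 * phi 4 ^ 4 with hP
  have hd : (4 : PowerSeries ℤ) ∣ P - phi 1 :=
    ⟨(1 + 2*a) * ((b + b^2) + (2*c + 6*c^2 + 8*c^3 + 4*c^4)
      + 4 * (b + b^2) * (2*c + 6*c^2 + 8*c^3 + 4*c^4)),
     by rw [hP, phi_eq_one_add_two_mul 1, phi_eq_one_add_two_mul 2,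
            phi_eq_one_add_two_mul 4]; ring⟩
  have h1 : (4 : PowerSeries ℤ) ∣ P ^ (2*m+1) - (phi 1) ^ (2*m+1) :=
    dvd_trans hd (sub_dvd_pow_sub_pow P (phi 1) (2*m+1))
  have h2 : (4 : PowerSeries ℤ) ∣ (phi 1) ^ (2*m+1) - phi 1 := by
    have hsq : (4 : PowerSeries ℤ) ∣ (phi 1) ^ 2 - 1 :=
      ⟨a + a^2, by rw [phi_eq_one_add_two_mul 1]; ring⟩
    have hdm : (4 : PowerSeries ℤ) ∣ ((phi 1)^2) ^ m - 1 ^ m :=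
      dvd_trans hsq (sub_dvd_pow_sub_pow _ _ m)
    have h3 : (phi 1) ^ (2*m+1) - phi 1 = phi 1 * (((phi 1)^2)^m - 1^m) := by ring
    rw [h3]; exact Dvd.dvd.mul_left hdm _
  simpa using dvd_add h1 h2

/-- For all odd `t ≥ 1` and all `n ≥ 0`, the coefficient of `q^(8n+2)` in
`(φ(q)·φ(q²)²·φ(q⁴)⁴)^t` is divisible by 4. -/
theorem coeff_phi_prod_pow_2 (t : ℕ) (ht1 : 1 ≤ t) (ht : Odd t) (n : ℕ) :
    (4 : ℤ) ∣ PowerSeries.coeff (8 * n + 2) ((phi 1 * phi 2 ^ 2 * phi 4 ^ 4) ^ t) := by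
  obtain ⟨g, hg⟩ := key_four_dvd t ht
  have h0 : PowerSeries.coeff (8 * n + 2) (phi 1) = 0 := by
    simp only [phi, PowerSeries.coeff_mk]
    rw [if_neg (by omega), if_neg]
    rintro ⟨k, hk, hkeq⟩
    rcases Nat.even_or_odd k with ⟨j, rfl⟩ | ⟨j, rfl⟩
    · have h2 : 8 * n + 2 = 4 * j ^ 2 := by rw [hkeq]; ring
      omega
    · have h2 : 8 * n + 2 = 4 * (j ^ 2 + j) + 1 := by rw [hkeq]; ring
      omega
  have hc : PowerSeries.coeff (8 * n + 2) ((phi 1 * phi 2 ^ 2 * phi 4 ^ 4) ^ t)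
      = PowerSeries.coeff (8 * n + 2) (phi 1) + 4 * PowerSeries.coeff (8 * n + 2) g := by
    have h4 : (4 : PowerSeries ℤ) = PowerSeries.C 4 := by simp
    have hco := congrArg (PowerSeries.coeff (8 * n + 2)) hg
    rw [map_sub, h4, PowerSeries.coeff_C_mul] at hco
    linarith
  rw [hc, h0]
  exact ⟨PowerSeries.coeff (8 * n + 2) g, by ring⟩
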